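/- Let α > 0 and let f be analytic on the unit disk with f(0) = 0, f'(0) = 1, such that Re[(f(z)/z)^{α-1} f'(z)] > 0 for all z in the unit disk (principal branch, with (f(z)/z)^{α-1} well-defined and nonvanishing). Write ψ(z) = (f(z)/z)^α = 1 + Σ_{n≥1} A_n z^n. Then for every n ≥ 1, |A_n| ≤ 2α/(n+α). -/

import Mathlib

open Complex Metric Real Set

lemma carath_aux (p : ℂ → ℂ) (hp : AnalyticOnNhd ℂ p (ball 0 1)) (hp0 : p 0 = 1)
    (hre : ∀ z ∈ ball (0:ℂ) 1, 0 < (p z).re) (n : ℕ) (hn : 1 ≤ n)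
    {r : ℝ} (hr0 : 0 < r) (hr1 : r < 1) :
    ‖iteratedDeriv n p 0 / (n.factorial : ℂ)‖ * r ^ n ≤ 2 := by
  have hsub : closedBall (0:ℂ) r ⊆ ball 0 1 := closedBall_subset_ball hr1
  have hdiff : DifferentiableOn ℂ p (closedBall (0:ℂ) (r.toNNReal : ℝ)) := by
    rw [Real.coe_toNNReal r hr0.le]
    exact fun z hz => ((hp z (hsub hz)).differentiableAt).differentiableWithinAt
  have hps : HasFPowerSeriesOnBall p (cauchyPowerSeries p 0 (r.toNNReal : ℝ)) 0 r.toNNReal :=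
    hdiff.hasFPowerSeriesOnBall (by simpa using hr0)
  rw [Real.coe_toNNReal r hr0.le] at hps
  -- coefficients and iterated derivatives
  have hco : ∀ k : ℕ, iteratedDeriv k p 0 =
      (k.factorial : ℂ) * ((cauchyPowerSeries p 0 r).coeff k) := by
    intro k
    have h := hps.factorial_smul (1:ℂ) k
    rw [iteratedDeriv_eq_iteratedFDeriv, ← h, nsmul_eq_mul]
    rfl
  set m : ℝ → ℂ := circleMap 0 r with hm
  have hm_ne : ∀ θ, m θ ≠ 0 := fun θ => circleMap_ne_center (ne_of_gt hr0)
  have habs : ∀ θ, ‖m θ‖ = r := fun θ => by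
    simp [hm, norm_circleMap_zero, abs_of_pos hr0]
  have hmem : ∀ θ, m θ ∈ ball (0:ℂ) 1 := fun θ => by
    simp [mem_ball, Complex.dist_eq, habs θ, hr1]
  set q : ℝ → ℂ := fun θ => p (m θ) with hqdef
  have hq : Continuous q :=
    hp.continuousOn.comp_continuous (continuous_circleMap 0 r) hmem
  have hmc : Continuous m := continuous_circleMap 0 r
  have hcirc : ∀ g : ℂ → ℂ, (∮ z in C(0, r), g z)
      = ∫ θ in (0:ℝ)..(2*π), (m θ * Complex.I) * g (m θ) := by
    intro g
    simp only [circleIntegral, deriv_circleMap, smul_eq_mul, hm]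
  -- Fact B : for k ≥ 1 the integral of m^k q vanishes
  have hzero : ∀ k : ℕ, 1 ≤ k → (∫ θ in (0:ℝ)..(2*π), (m θ)^k * q θ) = 0 := by
    intro k hk
    have hg : (∮ z in C(0, r), z^(k-1) * p z) = 0 := by
      apply circleIntegral_eq_zero_of_differentiable_on_off_countable hr0.le
        Set.countable_empty
      · exact ((continuous_pow (k-1)).continuousOn).mul (hp.continuousOn.mono hsub)
      · intro z hz
        exact ((differentiable_pow (k-1)).differentiableAt).mul
          (hp z (ball_subset_ball hr1.le hz.1)).differentiableAt
    rw [hcirc] at hg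
    have heq : ∀ θ : ℝ, (m θ * Complex.I) * ((m θ)^(k-1) * p (m θ))
        = Complex.I * ((m θ)^k * q θ) := by
      intro θ
      have : (m θ)^k = m θ * (m θ)^(k-1) := by
        conv_lhs => rw [← Nat.succ_pred_eq_of_pos hk]
        rw [pow_succ']
        rfl
      rw [this, hqdef]; ring
    rw [intervalIntegral.integral_congr (fun θ _ => heq θ),
      intervalIntegral.integral_const_mul] at hg
    exact (mul_eq_zero.1 hg).resolve_left Complex.I_ne_zero
  -- Fact A : coefficient formula
  have hcoeff : ∀ k : ℕ, ((cauchyPowerSeries p 0 r).coeff k)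
      = (2*π : ℂ)⁻¹ * ∫ θ in (0:ℝ)..(2*π), ((m θ)^k)⁻¹ * q θ := by
    intro k
    have h := cauchyPowerSeries_apply p 0 r k 1
    have hc : (cauchyPowerSeries p 0 r).coeff k = cauchyPowerSeries p 0 r k (fun _ => 1) := rfl
    rw [hc, h, hcirc]
    have heq : ∀ θ : ℝ, (m θ * Complex.I) * (((1:ℂ) / (m θ - 0))^k • ((m θ - 0)⁻¹ • p (m θ)))
        = Complex.I * (((m θ)^k)⁻¹ * q θ) := by
      intro θ
      simp only [sub_zero, smul_eq_mul, one_div, inv_pow, hqdef]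
      linear_combination (Complex.I * ((m θ) ^ k)⁻¹ * p (m θ)) * (mul_inv_cancel₀ (hm_ne θ))
    rw [intervalIntegral.integral_congr (fun θ _ => heq θ),
      intervalIntegral.integral_const_mul, smul_eq_mul]
    rw [← mul_assoc]
    congr 1
    have hI : ((2*(π:ℂ)*Complex.I))⁻¹ * Complex.I = (2*(π:ℂ))⁻¹ := by
      field_simp
    exact hI
  -- Fact D : mean value
  have hπC : (2*(π:ℂ)) ≠ 0 := by
    simp [Real.pi_ne_zero, Complex.ofReal_ne_zero]
  have hD : (∫ θ in (0:ℝ)..(2*π), q θ) = 2*(π:ℂ) := by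
    have h0 := hco 0
    rw [iteratedDeriv_zero, hp0] at h0
    have hc0 : (cauchyPowerSeries p 0 r).coeff 0 = 1 := by simpa using h0.symm
    have h1 := hcoeff 0
    rw [hc0] at h1
    simp only [pow_zero, inv_one, one_mul] at h1
    field_simp at h1
    first
      | exact h1
      | exact h1.symm
      | linear_combination h1
      | linear_combination -h1
  have hDre : (∫ θ in (0:ℝ)..(2*π), (q θ).re) = 2*π := by
    have h2 := Complex.reCLM.intervalIntegral_comp_comm
      (μ := MeasureTheory.volume) (hq.intervalIntegrable 0 (2*π))
    simp only [Complex.reCLM_apply] at h2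
    rw [h2, hD]
    simp
  -- conjugate integral vanishes
  have hconjm : ∀ θ, (starRingEnd ℂ) (m θ) = ((r^2:ℝ):ℂ) * (m θ)⁻¹ := by
    intro θ
    have h1 : m θ * (starRingEnd ℂ) (m θ) = ((r^2:ℝ):ℂ) := by
      rw [Complex.mul_conj, Complex.normSq_eq_norm_sq, habs]
    rw [← h1]
    field_simp [hm_ne θ]
  have hconj0 : (∫ θ in (0:ℝ)..(2*π), ((m θ)^n)⁻¹ * (starRingEnd ℂ) (q θ)) = 0 := by
    have hB := hzero n hn
    have hL := (Complex.conjCLE.toContinuousLinearMap).intervalIntegral_comp_comm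
      (μ := MeasureTheory.volume) (((hmc.pow n).mul hq).intervalIntegrable 0 (2*π))
    simp only [ContinuousLinearEquiv.coe_coe, Complex.conjCLE_apply, Pi.mul_apply, Pi.pow_apply] at hL
    rw [hB] at hL
    simp only [map_zero, map_mul, map_pow] at hL
    have heq2 : ∀ θ : ℝ, ((starRingEnd ℂ) (m θ))^n * (starRingEnd ℂ) (q θ)
        = (((r^2:ℝ):ℂ))^n * (((m θ)^n)⁻¹ * (starRingEnd ℂ) (q θ)) := by
      intro θ
      rw [hconjm θ, mul_pow, inv_pow]
      ring
    rw [intervalIntegral.integral_congr (fun θ _ => heq2 θ),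
      intervalIntegral.integral_const_mul] at hL
    have hr2n : (((r^2:ℝ):ℂ))^n ≠ 0 := by
      apply pow_ne_zero
      simp [Complex.ofReal_ne_zero]
      positivity
    exact (mul_eq_zero.1 hL).resolve_left hr2n
  -- split the coefficient integral
  have hmn : Continuous fun θ => ((m θ)^n)⁻¹ :=
    (hmc.pow n).inv₀ (fun θ => pow_ne_zero n (hm_ne θ))
  have hint1 : IntervalIntegrable (fun θ => ((m θ)^n)⁻¹ * q θ) MeasureTheory.volume 0 (2*π) :=
    (hmn.mul hq).intervalIntegrable _ _
  have hint2 : IntervalIntegrable (fun θ => ((m θ)^n)⁻¹ * (starRingEnd ℂ) (q θ))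
      MeasureTheory.volume 0 (2*π) :=
    (hmn.mul (Complex.continuous_conj.comp hq)).intervalIntegrable _ _
  have hsplit : ((cauchyPowerSeries p 0 r).coeff n) = (2*(π:ℂ))⁻¹ *
      ∫ θ in (0:ℝ)..(2*π), ((m θ)^n)⁻¹ * ((2*(q θ).re : ℝ):ℂ) := by
    rw [hcoeff n]
    congr 1
    calc (∫ θ in (0:ℝ)..(2*π), ((m θ)^n)⁻¹ * q θ)
        = (∫ θ in (0:ℝ)..(2*π), ((m θ)^n)⁻¹ * q θ)
          + ∫ θ in (0:ℝ)..(2*π), ((m θ)^n)⁻¹ * (starRingEnd ℂ) (q θ) := by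
          rw [hconj0, add_zero]
      _ = ∫ θ in (0:ℝ)..(2*π),
          (((m θ)^n)⁻¹ * q θ + ((m θ)^n)⁻¹ * (starRingEnd ℂ) (q θ)) :=
          (intervalIntegral.integral_add hint1 hint2).symm
      _ = ∫ θ in (0:ℝ)..(2*π), ((m θ)^n)⁻¹ * ((2*(q θ).re : ℝ):ℂ) := by
          apply intervalIntegral.integral_congr
          intro θ _
          dsimp only
          rw [← mul_add, Complex.add_conj]
  -- final bound
  have hnorm : ‖(cauchyPowerSeries p 0 r).coeff n‖ ≤ 2 / r^n := by
    rw [hsplit, norm_mul]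
    have h2π : ‖(2*(π:ℂ))⁻¹‖ = (2*π)⁻¹ := by
      rw [norm_inv]
      have : (2*(π:ℂ)) = ((2*π : ℝ) : ℂ) := by push_cast; ring
      rw [this, Complex.norm_real, Real.norm_eq_abs, abs_of_pos Real.two_pi_pos]
    rw [h2π]
    have hbound : ‖∫ θ in (0:ℝ)..(2*π), ((m θ)^n)⁻¹ * ((2*(q θ).re : ℝ):ℂ)‖
        ≤ ∫ θ in (0:ℝ)..(2*π), (r^n)⁻¹ * (2*(q θ).re) := by
      refine le_trans (intervalIntegral.norm_integral_le_integral_norm Real.two_pi_pos.le) ?_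
      apply le_of_eq
      apply intervalIntegral.integral_congr
      intro θ _
      dsimp only
      rw [norm_mul, norm_inv, norm_pow]
      have h1 : ‖m θ‖ = r := by rw [habs]
      have h2 := hre (m θ) (hmem θ)
      rw [h1, Complex.norm_real, Real.norm_eq_abs, abs_of_pos (by positivity)]
    have hval : (∫ θ in (0:ℝ)..(2*π), (r^n)⁻¹ * (2*(q θ).re)) = (r^n)⁻¹ * (4*π) := by
      rw [intervalIntegral.integral_const_mul]
      have : (∫ θ in (0:ℝ)..(2*π), 2*(q θ).re) = 2 * ∫ θ in (0:ℝ)..(2*π), (q θ).re := by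
        rw [intervalIntegral.integral_const_mul]
      rw [this, hDre]
      ring
    rw [hval] at hbound
    calc (2*π)⁻¹ * ‖∫ θ in (0:ℝ)..(2*π), ((m θ)^n)⁻¹ * ((2*(q θ).re : ℝ):ℂ)‖
        ≤ (2*π)⁻¹ * ((r^n)⁻¹ * (4*π)) := by
          apply mul_le_mul_of_nonneg_left hbound
          positivity
      _ = 2 / r^n := by
          field_simp
          ring
  have hfac : ((n.factorial : ℂ)) ≠ 0 := by
    exact_mod_cast Nat.cast_ne_zero.mpr n.factorial_ne_zero
  rw [hco n, mul_div_cancel_left₀ _ hfac]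
  calc ‖(cauchyPowerSeries p 0 r).coeff n‖ * r^n ≤ (2 / r^n) * r^n := by
        apply mul_le_mul_of_nonneg_right hnorm
        positivity
    _ = 2 := by field_simp

lemma carath (p : ℂ → ℂ) (hp : AnalyticOnNhd ℂ p (ball 0 1)) (hp0 : p 0 = 1)
    (hre : ∀ z ∈ ball (0:ℂ) 1, 0 < (p z).re) (n : ℕ) (hn : 1 ≤ n) :
    ‖iteratedDeriv n p 0 / (n.factorial : ℂ)‖ ≤ 2 := by
  set c := ‖iteratedDeriv n p 0 / (n.factorial : ℂ)‖ with hc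
  have htend : Filter.Tendsto (fun r : ℝ => c * r ^ n)
      (nhdsWithin 1 (Set.Iio 1)) (nhds c) := by
    have hcont : Continuous fun r : ℝ => c * r ^ n := by continuity
    have h1 := hcont.tendsto 1
    simp only [one_pow, mul_one] at h1
    exact h1.mono_left nhdsWithin_le_nhds
  refine le_of_tendsto htend ?_
  filter_upwards [Ioo_mem_nhdsLT_of_mem (Set.right_mem_Ioc.mpr one_pos)] with r hr
  exact carath_aux p hp hp0 hre n hn hr.1 hr.2

lemma iterderiv_aux {g : ℂ → ℂ} (hg : AnalyticOnNhd ℂ g (ball 0 1)) (c : ℂ) :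
    ∀ n : ℕ, ∀ z ∈ ball (0:ℂ) 1,
      iteratedDeriv n (fun w => g w + c * (w * deriv g w)) z
        = iteratedDeriv n g z
          + c * (z * iteratedDeriv (n+1) g z + n * iteratedDeriv n g z) := by
  have hD : ∀ k : ℕ, AnalyticOnNhd ℂ (iteratedDeriv k g) (ball 0 1) := by
    intro k
    induction k with
    | zero => simpa [iteratedDeriv_zero] using hg
    | succ k ih => rw [iteratedDeriv_succ]; exact ih.deriv
  intro n
  induction n with
  | zero =>
    intro z hz
    simp only [iteratedDeriv_zero, Nat.cast_zero, zero_mul, add_zero, zero_add,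
      iteratedDeriv_one]
  | succ n ih =>
    intro z hz
    rw [iteratedDeriv_succ]
    have hev : (iteratedDeriv n (fun w => g w + c * (w * deriv g w)))
        =ᶠ[nhds z] (fun w => iteratedDeriv n g w
          + c * (w * iteratedDeriv (n+1) g w + n * iteratedDeriv n g w)) := by
      filter_upwards [isOpen_ball.mem_nhds hz] with w hw
      exact ih w hw
    rw [hev.deriv_eq]
    have h1 : HasDerivAt (iteratedDeriv n g) (iteratedDeriv (n+1) g z) z := by
      have h := ((hD n) z hz).differentiableAt.hasDerivAt
      rwa [← iteratedDeriv_succ] at h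
    have h2 : HasDerivAt (iteratedDeriv (n+1) g) (iteratedDeriv (n+2) g z) z := by
      have h := ((hD (n+1)) z hz).differentiableAt.hasDerivAt
      rwa [← iteratedDeriv_succ] at h
    have h3 : HasDerivAt (fun w => iteratedDeriv n g w
        + c * (w * iteratedDeriv (n+1) g w + n * iteratedDeriv n g w))
        (iteratedDeriv (n+1) g z
          + c * ((1 * iteratedDeriv (n+1) g z + z * iteratedDeriv (n+2) g z)
            + (n:ℂ) * iteratedDeriv (n+1) g z)) z := by
      exact h1.add ((((hasDerivAt_id z).mul h2).add (h1.const_mul (n:ℂ))).const_mul c)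
    rw [h3.deriv]
    push_cast
    ring


open Complex Metric

/-- If `f ∈ B₁(α)`, i.e. `f` is analytic on the unit disk, normalized, with
`Re[(f(z)/z)^(α-1) f'(z)] > 0`, and `ψ(z) = (f(z)/z)^α`, then the Taylor coefficients `A n`
of `ψ` satisfy `|A n| ≤ 2α/(n+α)` for `n ≥ 1`. -/
theorem bazilevic_coeff_bound
    (α : ℝ) (hα : 0 < α)
    (f ψ : ℂ → ℂ)
    (hf : AnalyticOn ℂ f (ball 0 1))
    (hf0 : f 0 = 0) (hf'0 : deriv f 0 = 1)
    (hfz : ∀ z ∈ ball (0:ℂ) 1, z ≠ 0 → f z / z ≠ 0)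
    (hRe : ∀ z ∈ ball (0:ℂ) 1, z ≠ 0 →
      0 < (((f z / z) ^ ((α : ℂ) - 1)) * deriv f z).re)
    (hψ : AnalyticOn ℂ ψ (ball 0 1))
    (hψ0 : ψ 0 = 1)
    (hψf : ∀ z ∈ ball (0:ℂ) 1, z ≠ 0 → ψ z = (f z / z) ^ (α : ℂ)) :
    ∀ n : ℕ, 1 ≤ n → ‖iteratedDeriv n ψ 0 / (n.factorial : ℂ)‖ ≤ 2 * α / (n + α) := by
  intro n hn
  have hαC : (α:ℂ) ≠ 0 := Complex.ofReal_ne_zero.mpr (ne_of_gt hα)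
  have hfN : AnalyticOnNhd ℂ f (ball 0 1) :=
    (isOpen_ball.analyticOn_iff_analyticOnNhd).1 hf
  have hψN : AnalyticOnNhd ℂ ψ (ball 0 1) :=
    (isOpen_ball.analyticOn_iff_analyticOnNhd).1 hψ
  have hψd : AnalyticOnNhd ℂ (deriv ψ) (ball 0 1) := hψN.deriv
  have hfd : AnalyticOnNhd ℂ (deriv f) (ball 0 1) := hfN.deriv
  set p : ℂ → ℂ := fun w => ψ w + (α:ℂ)⁻¹ * (w * deriv ψ w) with hpdef
  have hpA : AnalyticOnNhd ℂ p (ball 0 1) :=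
    hψN.add ((analyticOnNhd_const).mul ((analyticOnNhd_id).mul hψd))
  have hp0 : p 0 = 1 := by simp [hpdef, hψ0]
  -- the fundamental differential identity, via the identity theorem
  set h : ℂ → ℂ :=
    fun z => z * deriv ψ z * f z - (α:ℂ) * ψ z * (z * deriv f z - f z) with hhdef
  have hhA : AnalyticOnNhd ℂ h (ball 0 1) := by
    apply AnalyticOnNhd.sub
    · exact ((analyticOnNhd_id).mul hψd).mul hfN
    · exact ((analyticOnNhd_const).mul hψN).mul
        (((analyticOnNhd_id).mul hfd).sub hfN)
  have hfd0 : HasDerivAt f 1 0 := by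
    have h1 := (hfN 0 (by simp)).differentiableAt.hasDerivAt
    rwa [hf'0] at h1
  have hslope : Filter.Tendsto (fun z => f z / z) (nhdsWithin 0 {(0:ℂ)}ᶜ) (nhds 1) := by
    have hsl := hasDerivAt_iff_tendsto_slope.mp hfd0
    refine hsl.congr' ?_
    filter_upwards [self_mem_nhdsWithin] with z hz
    have hz' : z ≠ 0 := hz
    simp [slope_def_field, hf0]
  have hev12 : ∀ᶠ z in nhdsWithin 0 {(0:ℂ)}ᶜ, dist (f z / z) 1 < 1/2 := by
    have := Metric.tendsto_nhds.mp hslope (1/2) (by norm_num)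
    simpa using this
  rw [eventually_nhdsWithin_iff] at hev12
  obtain ⟨ε, hε, hball⟩ := Metric.eventually_nhds_iff.1 hev12
  set δ := min ε 1 with hδdef
  have hδ0 : 0 < δ := lt_min hε one_pos
  have hδε : δ ≤ ε := min_le_left _ _
  have hδ1 : δ ≤ 1 := min_le_right _ _
  have hsubδ : ball (0:ℂ) δ ⊆ ball 0 1 := ball_subset_ball hδ1
  have hslit : ∀ z ∈ ball (0:ℂ) δ, z ≠ 0 → f z / z ∈ Complex.slitPlane := by
    intro z hz hz0
    have hd : dist (f z / z) 1 < 1/2 := by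
      apply hball _ hz0
      rw [mem_ball] at hz
      exact lt_of_lt_of_le hz hδε
    have hre2 : |(f z / z - 1).re| ≤ ‖f z / z - 1‖ := Complex.abs_re_le_norm _
    rw [Complex.dist_eq] at hd
    rw [Complex.mem_slitPlane_iff]
    left
    have : (f z / z - 1).re = (f z / z).re - 1 := by simp
    rw [this] at hre2
    have := abs_le.1 hre2
    linarith [this.1, hd]
  have hzero : ∀ z ∈ ball (0:ℂ) δ, z ≠ 0 → h z = 0 := by
    intro z hzδ hz0
    have hz1 : z ∈ ball (0:ℂ) 1 := hsubδ hzδ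
    have hne : f z / z ≠ 0 := hfz z hz1 hz0
    have hdq : HasDerivAt (fun w => f w / w) ((deriv f z * z - f z * 1)/z^2) z :=
      HasDerivAt.div ((hfN z hz1).differentiableAt.hasDerivAt) (hasDerivAt_id z) hz0
    have hdc : HasDerivAt (fun w => (f w / w)^(α:ℂ))
        ((α:ℂ) * (f z/z)^((α:ℂ)-1) * ((deriv f z * z - f z * 1)/z^2)) z :=
      hdq.cpow_const (hslit z hzδ hz0)
    have hev : ψ =ᶠ[nhds z] fun w => (f w / w)^(α:ℂ) := by
      have hopen : IsOpen (ball (0:ℂ) δ \ {0}) := isOpen_ball.sdiff isClosed_singleton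
      filter_upwards [hopen.mem_nhds ⟨hzδ, hz0⟩] with w hw
      exact hψf w (hsubδ hw.1) hw.2
    have hderiv : deriv ψ z
        = (α:ℂ) * (f z/z)^((α:ℂ)-1) * ((deriv f z * z - f z * 1)/z^2) := by
      rw [hev.deriv_eq, hdc.deriv]
    have hψz : ψ z = (f z/z)^((α:ℂ)-1) * (f z / z) := by
      rw [hψf z hz1 hz0]
      conv_lhs => rw [show (α:ℂ) = ((α:ℂ)-1) + 1 by ring]
      rw [Complex.cpow_add _ _ hne, Complex.cpow_one]
    simp only [hhdef]
    rw [hderiv, hψz]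
    field_simp
    ring
  have hh00 : h 0 = 0 := by simp [hhdef, hf0]
  have hev0 : h =ᶠ[nhds 0] 0 := by
    filter_upwards [isOpen_ball.mem_nhds (mem_ball_self hδ0)] with w hw
    by_cases hw0 : w = 0
    · rw [hw0]; exact hh00
    · exact hzero w hw hw0
  have hh0 : Set.EqOn h 0 (ball (0:ℂ) 1) :=
    hhA.eqOn_zero_of_preconnected_of_eventuallyEq_zero
      (convex_ball (0:ℂ) 1).isPreconnected (by simp) hev0
  -- positivity of Re p
  have hpre : ∀ z ∈ ball (0:ℂ) 1, 0 < (p z).re := by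
    intro z hz
    by_cases hz0 : z = 0
    · rw [hz0, hp0]; norm_num
    · have hne := hfz z hz hz0
      have hfne : f z ≠ 0 := fun h' => hne (by simp [h'])
      have hhz := hh0 hz
      simp only [hhdef, Pi.zero_apply] at hhz
      have hcp : (f z / z)^((α:ℂ)-1) = ψ z * z / f z := by
        rw [Complex.cpow_sub _ _ hne, Complex.cpow_one, ← hψf z hz hz0]
        field_simp
      have hkey : p z = (f z / z)^((α:ℂ)-1) * deriv f z := by
        rw [hcp, hpdef]
        field_simp
        linear_combination hhz
      rw [hkey]
      exact hRe z hz hz0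
  -- Leibniz relation at 0
  have hiter := iterderiv_aux hψN ((α:ℂ)⁻¹) n 0 (by simp)
  have hrel : iteratedDeriv n p 0 = (1 + (n:ℂ) * (α:ℂ)⁻¹) * iteratedDeriv n ψ 0 := by
    rw [hpdef, hiter]
    ring
  -- Caratheodory bound and conclusion
  have hcar := carath p hpA hp0 hpre n hn
  rw [hrel, mul_div_assoc, norm_mul] at hcar
  have hcoef : ‖(1 + (n:ℂ)*(α:ℂ)⁻¹)‖ = ((n:ℝ) + α)/α := by
    have he : (1 + (n:ℂ)*(α:ℂ)⁻¹) = ((((n:ℝ) + α)/α : ℝ) : ℂ) := by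
      push_cast
      field_simp
      ring
    rw [he, Complex.norm_real, Real.norm_eq_abs, abs_of_pos (by positivity)]
  rw [hcoef] at hcar
  have hpos : 0 < ((n:ℝ) + α)/α := by positivity
  have h2 : 2*α/((n:ℝ)+α) = 2/(((n:ℝ)+α)/α) := by
    rw [div_div_eq_mul_div]
  rw [h2, le_div_iff₀ hpos, mul_comm]
  exact hcar
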